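/- Assume R is an integral domain of characteristic 0 and let α, β be positive real roots. Then: (1) the element x_α is irreducible in S; (2) if α ≠ β and x ∈ S is such that x_α divides x_β · x in S, then x_α divides x. -/

import Mathlib

open scoped Classical
noncomputable section

/-- Truncation (up to degree `N` in each variable) of the double power series
`F(a,b) = Σ_{i,j} c i j • a^i b^j` of a coefficient family `c`, substituted at two
polynomials `a b` in three variables. -/
noncomputable def fglTrunc {R : Type} [CommRing R] (c : ℕ → ℕ → R) (N : ℕ)
    (a b : MvPolynomial (Fin 3) R) : MvPolynomial (Fin 3) R :=
  ∑ p ∈ Finset.range N ×ˢ Finset.range N, MvPolynomial.C (c p.1 p.2) * a ^ p.1 * b ^ p.2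

/-- A one-dimensional commutative formal group law `F(x,y) = Σ_{i,j} c i j x^i y^j`
over `R`, recorded by its coefficients.  Associativity is expressed through
arbitrarily high truncations. -/
structure FormalGroupLaw (R : Type) [CommRing R] where
  c : ℕ → ℕ → R
  c_comm : ∀ i j, c i j = c j i
  c_norm : c 1 0 = 1
  c_zero : ∀ i, i ≠ 1 → c i 0 = 0
  c_assoc : ∀ (N : ℕ) (d : Fin 3 →₀ ℕ), d 0 + d 1 + d 2 < N →
    MvPolynomial.coeff d
      (fglTrunc c N (fglTrunc c N (MvPolynomial.X 0) (MvPolynomial.X 1)) (MvPolynomial.X 2)) =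
    MvPolynomial.coeff d
      (fglTrunc c N (MvPolynomial.X 0) (fglTrunc c N (MvPolynomial.X 1) (MvPolynomial.X 2)))

/-- The whole setting of the paper: a generalized Cartan matrix together with its
root datum and Weyl group `W`, a Demazure lattice `Λ`, a one-dimensional commutative
formal group law `F` over `R`, the formal group algebra `S = R[[Λ]]_F` (presented by
its defining relations together with an `R`-algebra isomorphism with a multivariate
power series ring), the localization `Q` of `S` at the classes `x_α` of all positive
roots, the twisted group algebra `Q_W = Q ⋊ R[W]` and its action on `Q`. -/
structure DemazureSetup (R : Type) [CommRing R] : Type 1 where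
  /-- size of the generalized Cartan matrix -/
  n : ℕ
  /-- the Demazure lattice `Λ` -/
  Λ : Type
  [Λadd : AddCommGroup Λ]
  [Λfree : Module.Free ℤ Λ]
  [Λfin : Module.Finite ℤ Λ]
  /-- the Weyl group -/
  W : Type
  [Wgrp : Group W]
  [Wact : DistribMulAction W Λ]
  /-- the simple reflections -/
  s : Fin n → W
  s_sq : ∀ i, s i * s i = 1
  s_gen : Subgroup.closure (Set.range s) = ⊤
  /-- the simple roots, viewed inside the Demazure lattice -/
  sroot : Fin n → Λ
  roots_indep : LinearIndependent ℤ sroot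
  /-- pairing with the simple coroots: `scoroot i λ = ⟨λ, α_i^∨⟩ ∈ ℤ` -/
  scoroot : Fin n → (Λ →+ ℤ)
  /-- diagonal entries of the generalized Cartan matrix `a_{ii} = ⟨α_i, α_i^∨⟩ = 2` -/
  cartan_diag : ∀ i, scoroot i (sroot i) = 2
  /-- off-diagonal entries `a_{ij} = ⟨α_j, α_i^∨⟩` are nonpositive -/
  cartan_off : ∀ i j, i ≠ j → scoroot i (sroot j) ≤ 0
  cartan_zero : ∀ i j, scoroot i (sroot j) = 0 ↔ scoroot j (sroot i) = 0
  /-- the simple reflections act by `s_i(λ) = λ - ⟨λ, α_i^∨⟩ α_i` -/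
  s_act : ∀ (i : Fin n) (lam : Λ), s i • lam = lam - scoroot i lam • sroot i
  /-- `W` acts faithfully on `Λ` -/
  act_faithful : ∀ w : W, (∀ lam : Λ, w • lam = lam) → w = 1
  /-- every simple root can be extended to a `ℤ`-basis of `Λ` (Demazure lattice) -/
  basis_ext : ∀ i, ∃ (b : Module.Basis (Fin (Module.finrank ℤ Λ)) ℤ Λ) (j : Fin (Module.finrank ℤ Λ)),
    b j = sroot i
  /-- the formal group law `F` -/
  fgl : FormalGroupLaw R
  /-- the formal group algebra `S = R[[Λ]]_F` -/
  S : Type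
  [Scr : CommRing S]
  [Salg : Algebra R S]
  /-- the generators `x_λ`, `λ ∈ Λ`, of the formal group algebra -/
  x : Λ → S
  x_zero : x 0 = 0
  /-- the augmentation map `ε : S → R`, `x_λ ↦ 0` -/
  aug : S →ₐ[R] R
  aug_x : ∀ lam, aug (x lam) = 0
  /-- the defining relation `x_{λ+μ} = F(x_λ, x_μ)`, modulo every power of the
  augmentation ideal -/
  x_add : ∀ (lam mu : Λ) (N : ℕ),
    x (lam + mu) - ∑ p ∈ Finset.range N ×ˢ Finset.range N,
      algebraMap R S (fgl.c p.1 p.2) * x lam ^ p.1 * x mu ^ p.2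
    ∈ RingHom.ker aug.toRingHom ^ N
  /-- a `ℤ`-basis of `Λ` -/
  e : Module.Basis (Fin (Module.finrank ℤ Λ)) ℤ Λ
  /-- `S` is the power series ring on the `x`-classes of a basis of `Λ` -/
  ψ : S ≃ₐ[R] MvPowerSeries (Fin (Module.finrank ℤ Λ)) R
  ψ_x : ∀ j, ψ (x (e j)) = MvPowerSeries.X j
  aug_ψ : ∀ a : S, aug a = @MvPowerSeries.constantCoeff (Fin (Module.finrank ℤ Λ)) R _ (ψ a)
  /-- the `W`-action on `S` induced by `w(x_λ) = x_{w(λ)}` -/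
  [SWact : MulSemiringAction W S]
  smul_x : ∀ (w : W) (lam : Λ), w • x lam = x (w • lam)
  smul_algebraMap : ∀ (w : W) (r : R), w • (algebraMap R S r) = algebraMap R S r
  smul_IF : ∀ (w : W) (N : ℕ) (a : S),
    a ∈ RingHom.ker aug.toRingHom ^ N → w • a ∈ RingHom.ker aug.toRingHom ^ N
  /-- the localization `Q = S[1/x_α : α ∈ Φ₊]` -/
  Q : Type
  [Qcr : CommRing Q]
  [Qalg : Algebra S Q]
  loc : IsLocalization (Submonoid.closure
    (x '' {v | (∃ (w : W) (i : Fin n), v = w • sroot i) ∧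
               v ∈ (AddSubmonoid.closure (Set.range sroot) : AddSubmonoid Λ)})) Q
  /-- the induced `W`-action on `Q` -/
  [QWact : MulSemiringAction W Q]
  smul_SQ : ∀ (w : W) (a : S), w • (algebraMap S Q a) = algebraMap S Q (w • a)
  /-- the twisted group algebra `Q_W = Q ⋊_R R[W]` -/
  QW : Type
  [QWring : Ring QW]
  [QWalg : Algebra R QW]
  /-- the canonical inclusion `Q → Q_W`, `q ↦ q δ_e` -/
  ι : Q →+* QW
  /-- the canonical basis elements `δ_w` of `Q_W` -/
  δ : W →* QW
  ι_alg : ∀ r : R, ι (algebraMap S Q (algebraMap R S r)) = algebraMap R QW r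
  /-- the twisted commutation rule `δ_w · q = w(q) · δ_w` -/
  twist : ∀ (w : W) (q : Q), δ w * ι q = ι (w • q) * δ w
  /-- `Q_W` is a free left `Q`-module with basis `{δ_w}_{w ∈ W}` -/
  qw_free : ∀ z : QW, ∃! c : W →₀ Q, z = c.sum fun w q => ι q * δ w
  /-- the action of `Q_W` on `Q`, `(q δ_w) · q' = q · w(q')` -/
  act : QW → Q → Q
  act_addl : ∀ (z z' : QW) (q : Q), act (z + z') q = act z q + act z' q
  act_spec : ∀ (q : Q) (w : W) (q' : Q), act (ι q * δ w) q' = q * (w • q')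

namespace DemazureSetup

attribute [instance] Λadd Λfree Λfin Wgrp Wact Scr Salg SWact Qcr Qalg QWact QWring QWalg

variable {R : Type} [CommRing R] (D : DemazureSetup R)

lemma sum_if_smul {n : ℕ} {Λ' : Type} [AddCommGroup Λ'] (f : Fin n → Λ') (j : Fin n) :
    ∑ i, (if i = j then (1 : ℤ) else 0) • f i = f j := by
  have : ∀ i, ((if i = j then (1 : ℤ) else 0) • f i) = if i = j then f i else 0 := by
    intro i
    split <;> simp
  rw [Finset.sum_congr rfl fun i _ => this i]
  simp

lemma sum_if_nsmul {n : ℕ} {Λ' : Type} [AddCommGroup Λ'] (f : Fin n → Λ') (j : Fin n) :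
    ∑ i, (if i = j then (1 : ℕ) else 0) • f i = f j := by
  have : ∀ i, ((if i = j then (1 : ℕ) else 0) • f i) = if i = j then f i else 0 := by
    intro i
    split <;> simp
  rw [Finset.sum_congr rfl fun i _ => this i]
  simp

/-- the set `Φ` of (real) roots -/
def roots : Set D.Λ := {v | ∃ (w : D.W) (i : Fin D.n), v = w • D.sroot i}

/-- the set `Φ₊` of positive roots -/
def posRoots : Set D.Λ :=
  {v | (∃ (w : D.W) (i : Fin D.n), v = w • D.sroot i) ∧
       v ∈ (AddSubmonoid.closure (Set.range D.sroot) : AddSubmonoid D.Λ)}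

/-- the set `Φ₋ = -Φ₊` of negative roots -/
def negRoots : Set D.Λ := {v | -v ∈ D.posRoots}

/-- the reflection `s_α ∈ W` associated to a real root `α` -/
def refl (v : D.Λ) : D.W :=
  if h : v ∈ D.roots then h.choose * D.s h.choose_spec.choose * h.choose⁻¹ else 1

/-- the product `s_{i_1} ⋯ s_{i_l}` of a word in the simple reflections -/
def wordProd (ω : List (Fin D.n)) : D.W := (ω.map D.s).prod

/-- the Coxeter length function on `W` -/
def len (w : D.W) : ℕ := sInf {l | ∃ ω : List (Fin D.n), ω.length = l ∧ D.wordProd ω = w}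

/-- `ω` is a reduced word for `w` -/
def IsReduced (w : D.W) (ω : List (Fin D.n)) : Prop :=
  D.wordProd ω = w ∧ ω.length = D.len w

/-- a choice of a reduced word `I_w` for every `w ∈ W` -/
def IsRedSystem (I : D.W → List (Fin D.n)) : Prop := ∀ w, D.IsReduced w (I w)

/-- the Bruhat order on `W` (subword characterization) -/
def bruhatLE (u w : D.W) : Prop :=
  ∃ ω ω' : List (Fin D.n), D.IsReduced w ω ∧ ω'.Sublist ω ∧ D.wordProd ω' = u

def bruhatLT (u w : D.W) : Prop := D.bruhatLE u w ∧ u ≠ w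

/-- the inversion set `Φ_w = {α ∈ Φ₊ : w⁻¹(α) ∈ Φ₋}` -/
def invSet (w : D.W) : Set D.Λ := {v | v ∈ D.posRoots ∧ w⁻¹ • v ∈ D.negRoots}

/-- the augmentation ideal `I_F = ker ε ⊂ S` -/
def IF : Ideal D.S := RingHom.ker D.aug.toRingHom

/-- the element `c_v = Π_{α ∈ Φ_v} x_α ∈ S` -/
def cElt (v : D.W) : D.S := ∏ᶠ a ∈ D.invSet v, D.x a

/-- the image of `x_λ` in the localization `Q` -/
def xQ (v : D.Λ) : D.Q := algebraMap D.S D.Q (D.x v)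

/-- the image of `a ∈ S` in the twisted group algebra `Q_W` -/
def SQW (a : D.S) : D.QW := D.ι (algebraMap D.S D.Q a)

/-- the formal Demazure element `X_α = (1/x_α)(1 - δ_{s_α}) ∈ Q_W` -/
def Xel (v : D.Λ) : D.QW := D.ι (Ring.inverse (D.xQ v)) * (1 - D.δ (D.refl v))

/-- the formal push-pull element `Y_α = 1/x_{-α} + (1/x_α) δ_{s_α} ∈ Q_W` -/
def Yel (v : D.Λ) : D.QW := D.ι (Ring.inverse (D.xQ (-v))) + D.ι (Ring.inverse (D.xQ v)) * D.δ (D.refl v)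

/-- `X_i = X_{α_i}` -/
def Xi (i : Fin D.n) : D.QW := D.Xel (D.sroot i)

/-- `Y_i = Y_{α_i}` -/
def Yi (i : Fin D.n) : D.QW := D.Yel (D.sroot i)

/-- `X_I = X_{i_1} ⋯ X_{i_l}` for a word `I = (i_1, …, i_l)` -/
def Xword (ω : List (Fin D.n)) : D.QW := (ω.map D.Xi).prod

/-- `Y_I = Y_{i_1} ⋯ Y_{i_l}` for a word `I = (i_1, …, i_l)` -/
def Yword (ω : List (Fin D.n)) : D.QW := (ω.map D.Yi).prod

/-- the formal affine Demazure algebra `D_F`: the `R`-subalgebra of `Q_W` generated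
by `S` and the elements `X_α`, `α ∈ Φ` -/
def DF : Subalgebra R D.QW :=
  Algebra.adjoin R (Set.range D.SQW ∪ D.Xel '' D.roots)

/-- `z · S ⊆ S` for `z ∈ Q_W` -/
def PreservesS (z : D.QW) : Prop :=
  ∀ a : D.S, ∃ b : D.S, D.act z (algebraMap D.S D.Q a) = algebraMap D.S D.Q b

end DemazureSetup

end
noncomputable section

namespace PSLemmas

open MvPowerSeries Finsupp

section Generic

variable {A : Type} [CommRing A] {M : ℕ}

/-- the linear coefficient of a product -/
lemma coeff_single_mul (u v : MvPowerSeries (Fin M) A) (j : Fin M) :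
    MvPowerSeries.coeff (R := A) (Finsupp.single j 1) (u * v) =
      MvPowerSeries.constantCoeff (σ := Fin M) (R := A) u * MvPowerSeries.coeff (R := A) (Finsupp.single j 1) v +
      MvPowerSeries.coeff (R := A) (Finsupp.single j 1) u * MvPowerSeries.constantCoeff (σ := Fin M) (R := A) v := by
  rw [MvPowerSeries.coeff_mul]
  have hs : (Finsupp.single j 1 : Fin M →₀ ℕ) ≠ 0 := by
    intro hcon
    have := congrArg (fun x => x j) hcon
    simp [Finsupp.single_apply] at this
  have hset : Finset.HasAntidiagonal.antidiagonal (Finsupp.single j 1 : Fin M →₀ ℕ) =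
      {((0 : Fin M →₀ ℕ), Finsupp.single j 1), (Finsupp.single j 1, (0 : Fin M →₀ ℕ))} := by
    ext p
    simp only [Finset.HasAntidiagonal.mem_antidiagonal, Finset.mem_insert, Finset.mem_singleton]
    constructor
    · intro hm
      have hj : p.1 j + p.2 j = 1 := by
        have := congrArg (fun x => x j) hm
        simpa [Finsupp.add_apply, Finsupp.single_apply] using this
      have hother : ∀ i, i ≠ j → p.1 i = 0 ∧ p.2 i = 0 := by
        intro i hi
        have := congrArg (fun x => x i) hm
        simp [Finsupp.add_apply, Finsupp.single_apply, (Ne.symm hi : j ≠ i)] at this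
        omega
      rcases Nat.eq_zero_or_pos (p.1 j) with h1 | h1
      · left
        have h2 : p.2 j = 1 := by omega
        rw [Prod.ext_iff]
        constructor
        · ext i
          rcases eq_or_ne i j with rfl | hi
          · simpa using h1
          · simpa using (hother i hi).1
        · ext i
          rcases eq_or_ne i j with rfl | hi
          · simpa [Finsupp.single_apply] using h2
          · simp [Finsupp.single_apply, (Ne.symm hi : j ≠ i), (hother i hi).2]
      · right
        have h1' : p.1 j = 1 := by omega
        have h2 : p.2 j = 0 := by omega
        rw [Prod.ext_iff]
        constructor
        · ext i
          rcases eq_or_ne i j with rfl | hi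
          · simpa [Finsupp.single_apply] using h1'
          · simp [Finsupp.single_apply, (Ne.symm hi : j ≠ i), (hother i hi).1]
        · ext i
          rcases eq_or_ne i j with rfl | hi
          · simpa using h2
          · simpa using (hother i hi).2
    · rintro (rfl | rfl) <;> simp
  rw [hset, Finset.sum_pair (by
    intro hcon
    exact hs (congrArg Prod.fst hcon).symm )]
  simp [MvPowerSeries.coeff_zero_eq_constantCoeff]

end Generic

variable {K : Type} [Field K] {M : ℕ}

def deg (d : Fin M →₀ ℕ) : ℕ := ∑ i, d i

lemma deg_add (u v : Fin M →₀ ℕ) : deg (u + v) = deg u + deg v := by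
  simp [deg, Finsupp.add_apply, Finset.sum_add_distrib]

lemma deg_eq_zero {d : Fin M →₀ ℕ} (h : deg d = 0) : d = 0 := by
  ext i
  have := Finset.sum_eq_zero_iff.mp h i (Finset.mem_univ i)
  simpa using this

lemma le_deg (d : Fin M →₀ ℕ) (i : Fin M) : d i ≤ deg d :=
  Finset.single_le_sum (fun _ _ => Nat.zero_le _) (Finset.mem_univ i)

lemma deg_single (j : Fin M) (k : ℕ) : deg (Finsupp.single j k) = k := by
  simp [deg, Finsupp.single_apply]

lemma deg_eq_one {d : Fin M →₀ ℕ} (h : deg d = 1) : ∃ j, d = Finsupp.single j 1 := by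
  have h1 : ∃ j, d j ≠ 0 := by
    by_contra hc
    push_neg at hc
    have : d = 0 := by ext i; simpa using hc i
    rw [this] at h; simp [deg] at h
  obtain ⟨j, hj⟩ := h1
  refine ⟨j, ?_⟩
  have hdj : d j = 1 := by
    have := le_deg d j; omega
  ext i
  rcases eq_or_ne i j with rfl | hne
  · simp [hdj]
  · have : d i + d j ≤ deg d := by
      have : ∑ k ∈ ({i, j} : Finset (Fin M)), d k ≤ deg d :=
        Finset.sum_le_sum_of_subset (Finset.subset_univ _)
      rwa [Finset.sum_pair hne] at this
    have : d i = 0 := by rw [h] at this; omega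
    simp [this, Finsupp.single_apply, (Ne.symm hne : j ≠ i)]

/-- the measure used for well-founded recursion in the division algorithm -/
def meas (j : Fin M) (d : Fin M →₀ ℕ) : ℕ := deg d * deg d + (deg d - d j)

/-- the index set of "higher" terms in the pivot decomposition of a product coefficient -/
def hiSet (j : Fin M) (d : Fin M →₀ ℕ) : Finset ((Fin M →₀ ℕ) × (Fin M →₀ ℕ)) :=
  (Finset.HasAntidiagonal.antidiagonal (d + Finsupp.single j 1)).filter
    (fun p => p.2 ≠ Finsupp.single j 1 ∧ p.2 ≠ 0)

lemma meas_lt {j : Fin M} {d : Fin M →₀ ℕ} {p : (Fin M →₀ ℕ) × (Fin M →₀ ℕ)}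
    (hp : p ∈ hiSet j d) : meas j p.1 < meas j d := by
  rw [hiSet, Finset.mem_filter, Finset.HasAntidiagonal.mem_antidiagonal] at hp
  obtain ⟨hm, h1, h0⟩ := hp
  have hdeg : deg p.1 + deg p.2 = deg d + 1 := by
    have := congrArg deg hm
    rwa [deg_add, deg_add, deg_single] at this
  have hp2 : deg p.2 ≠ 0 := fun h => h0 (deg_eq_zero h)
  rcases eq_or_ne (deg p.2) 1 with h2 | h2
  · obtain ⟨k, hk⟩ := deg_eq_one h2
    have hkj : k ≠ j := by rintro rfl; exact h1 hk
    have hpj : p.1 j = d j + 1 := by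
      have := congrArg (fun x => x j) hm
      simp [hk, Finsupp.single_apply, hkj, Finsupp.add_apply] at this
      simpa [Finsupp.single_apply] using this
    have hd1 : deg p.1 = deg d := by omega
    have hle : p.1 j ≤ deg p.1 := le_deg _ _
    rw [meas, meas, hd1, hpj]
    have : d j + 1 ≤ deg d := by omega
    omega
  · have h2' : 2 ≤ deg p.2 := by omega
    have hd1 : deg p.1 + 1 ≤ deg d := by omega
    have hle : p.1 j ≤ deg p.1 := le_deg _ _
    rw [meas, meas]
    have hD : 1 ≤ deg d := by omega
    nlinarith [le_deg p.1 j, Nat.sub_le (deg p.1) (p.1 j), Nat.sub_le (deg d) (d j)]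

/-- pivot decomposition of a product coefficient -/
lemma coeff_mul_pivot (j : Fin M) (h f : MvPowerSeries (Fin M) K)
    (hc : constantCoeff (σ := Fin M) (R := K) f = 0) (d : Fin M →₀ ℕ) :
    MvPowerSeries.coeff (R := K) (d + Finsupp.single j 1) (h * f) =
      MvPowerSeries.coeff (R := K) d h * MvPowerSeries.coeff (R := K) (Finsupp.single j 1) f +
      ∑ p ∈ hiSet j d, MvPowerSeries.coeff (R := K) p.1 h * MvPowerSeries.coeff (R := K) p.2 f := by
  rw [MvPowerSeries.coeff_mul]
  rw [← Finset.sum_filter_add_sum_filter_not (Finset.HasAntidiagonal.antidiagonal (d + Finsupp.single j 1))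
    (fun p => p.2 ≠ Finsupp.single j 1 ∧ p.2 ≠ 0)]
  rw [add_comm, hiSet]
  congr 1
  have hset : (Finset.HasAntidiagonal.antidiagonal (d + Finsupp.single j 1)).filter
      (fun p => ¬(p.2 ≠ Finsupp.single j 1 ∧ p.2 ≠ 0)) =
      {(d, Finsupp.single j 1), (d + Finsupp.single j 1, 0)} := by
    ext p
    simp only [Finset.mem_filter, Finset.HasAntidiagonal.mem_antidiagonal, Finset.mem_insert,
      Finset.mem_singleton, not_and_or, not_ne_iff]
    constructor
    · rintro ⟨hm, h1 | h0⟩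
      · left
        rw [h1] at hm
        have : p.1 = d := add_right_cancel hm
        rw [Prod.ext_iff]; exact ⟨this, h1⟩
      · right
        rw [Prod.ext_iff]
        constructor
        · rw [h0, add_zero] at hm; exact hm
        · exact h0
    · rintro (rfl | rfl)
      · exact ⟨rfl, Or.inl rfl⟩
      · exact ⟨by simp, Or.inr rfl⟩
  rw [hset]
  rw [Finset.sum_pair]
  · have : (MvPowerSeries.coeff (R := K) (0 : Fin M →₀ ℕ)) f = 0 := by
      rw [MvPowerSeries.coeff_zero_eq_constantCoeff]; exact hc
    rw [this, mul_zero, add_zero]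
  · intro hcon
    have h2 := congrArg Prod.snd hcon
    simp only at h2
    have h3 := congrArg (fun x => x j) h2
    simp [Finsupp.single_apply] at h3

variable (f g : MvPowerSeries (Fin M) K) (j : Fin M)

/-- coefficients of the quotient in division by a power series with invertible pivot -/
def divQ (d : Fin M →₀ ℕ) : K :=
  (MvPowerSeries.coeff (R := K) (d + Finsupp.single j 1) g -
    ∑ p ∈ (hiSet j d).attach,
      divQ p.1.1 * MvPowerSeries.coeff (R := K) p.1.2 f) *
  (MvPowerSeries.coeff (R := K) (Finsupp.single j 1) f)⁻¹
termination_by meas j d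
decreasing_by exact meas_lt p.2

lemma divQ_spec (hj : MvPowerSeries.coeff (R := K) (Finsupp.single j 1) f ≠ 0) (d : Fin M →₀ ℕ) :
    divQ f g j d * MvPowerSeries.coeff (R := K) (Finsupp.single j 1) f =
    MvPowerSeries.coeff (R := K) (d + Finsupp.single j 1) g -
      ∑ p ∈ hiSet j d, divQ f g j p.1 * MvPowerSeries.coeff (R := K) p.2 f := by
  rw [divQ, mul_assoc, inv_mul_cancel₀ hj, mul_one]
  congr 1
  rw [← Finset.sum_attach (hiSet j d) (fun p => divQ f g j p.1 * MvPowerSeries.coeff (R := K) p.2 f)]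

/-- division with remainder free of the pivot variable, with control of the
coefficients in a subring -/
theorem division (hc : constantCoeff (σ := Fin M) (R := K) f = 0)
    (hj : MvPowerSeries.coeff (R := K) (Finsupp.single j 1) f ≠ 0) (T : Subring K)
    (hfT : ∀ d, MvPowerSeries.coeff (R := K) d f ∈ T)
    (hjT : (MvPowerSeries.coeff (R := K) (Finsupp.single j 1) f)⁻¹ ∈ T)
    (hgT : ∀ d, MvPowerSeries.coeff (R := K) d g ∈ T) :
    ∃ q r : MvPowerSeries (Fin M) K, g = q * f + r ∧
      (∀ d, MvPowerSeries.coeff (R := K) d q ∈ T) ∧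
      (∀ d, d j ≠ 0 → MvPowerSeries.coeff (R := K) d r = 0) := by
  set q : MvPowerSeries (Fin M) K := fun d => divQ f g j d with hq
  have hqc : ∀ d, MvPowerSeries.coeff (R := K) d q = divQ f g j d := fun d => rfl
  refine ⟨q, g - q * f, by ring, ?_, ?_⟩
  · -- membership by strong induction on the measure
    have main : ∀ N d, meas j d < N → divQ f g j d ∈ T := by
      intro N
      induction N with
      | zero => intro d hd; omega
      | succ N ih =>
        intro d hd
        rw [divQ]
        refine Subring.mul_mem _ (Subring.sub_mem _ (hgT _) ?_) hjT
        refine Subring.sum_mem _ ?_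
        intro p _
        refine Subring.mul_mem _ (ih _ ?_) (hfT _)
        have := meas_lt p.2
        omega
    intro d
    rw [hqc]
    exact main (meas j d + 1) d (Nat.lt_succ_self _)
  · intro d hd
    have hrepr : d = (d - Finsupp.single j 1) + Finsupp.single j 1 := by
      ext i
      rcases eq_or_ne i j with rfl | hne
      · simp [Finsupp.single_apply]; omega
      · simp [Finsupp.single_apply, (Ne.symm hne : j ≠ i)]
    rw [map_sub, hrepr, coeff_mul_pivot j q f hc]
    rw [hqc, divQ_spec f g j hj]
    have : ∀ p ∈ hiSet j (d - Finsupp.single j 1),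
        MvPowerSeries.coeff (R := K) p.1 q * MvPowerSeries.coeff (R := K) p.2 f =
        divQ f g j p.1 * MvPowerSeries.coeff (R := K) p.2 f := by
      intro p _; rw [hqc]
    rw [Finset.sum_congr rfl this]
    ring

/-- if `h * f` has no coefficients on exponents containing the pivot variable, `h = 0` -/
theorem eq_zero_of_mul_pivot_free (hc : constantCoeff (σ := Fin M) (R := K) f = 0)
    (hj : MvPowerSeries.coeff (R := K) (Finsupp.single j 1) f ≠ 0) (h : MvPowerSeries (Fin M) K)
    (hfree : ∀ d, d j ≠ 0 → MvPowerSeries.coeff (R := K) d (h * f) = 0) : h = 0 := by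
  have main : ∀ N d, meas j d < N → MvPowerSeries.coeff (R := K) d h = 0 := by
    intro N
    induction N with
    | zero => intro d hd; omega
    | succ N ih =>
      intro d hd
      have h0 : MvPowerSeries.coeff (R := K) (d + Finsupp.single j 1) (h * f) = 0 := by
        apply hfree
        simp [Finsupp.add_apply, Finsupp.single_apply]
      rw [coeff_mul_pivot j h f hc] at h0
      have hsum : ∑ p ∈ hiSet j d, MvPowerSeries.coeff (R := K) p.1 h * MvPowerSeries.coeff (R := K) p.2 f
          = 0 := by
        apply Finset.sum_eq_zero
        intro p hp
        have := meas_lt hp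
        rw [ih p.1 (by omega), zero_mul]
      rw [hsum, add_zero] at h0
      exact (mul_eq_zero.mp h0).resolve_right hj
  ext d
  rw [map_zero]
  exact main (meas j d + 1) d (Nat.lt_succ_self _)

/-- products of pivot-free series are pivot-free -/
lemma mul_pivot_free {a b : MvPowerSeries (Fin M) K}
    (ha : ∀ d, d j ≠ 0 → MvPowerSeries.coeff (R := K) d a = 0)
    (hb : ∀ d, d j ≠ 0 → MvPowerSeries.coeff (R := K) d b = 0) :
    ∀ d, d j ≠ 0 → MvPowerSeries.coeff (R := K) d (a * b) = 0 := by
  intro d hd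
  rw [MvPowerSeries.coeff_mul]
  apply Finset.sum_eq_zero
  intro p hp
  rw [Finset.HasAntidiagonal.mem_antidiagonal] at hp
  have : p.1 j ≠ 0 ∨ p.2 j ≠ 0 := by
    by_contra hcon
    push_neg at hcon
    apply hd
    have := congrArg (fun x => x j) hp
    simp [Finsupp.add_apply] at this
    omega
  rcases this with h | h
  · rw [ha _ h, zero_mul]
  · rw [hb _ h, mul_zero]

/-- Euclid over the fraction field: pivot series are prime -/
theorem dvd_or_dvd_of_pivot (hc : constantCoeff (σ := Fin M) (R := K) f = 0)
    (hj : MvPowerSeries.coeff (R := K) (Finsupp.single j 1) f ≠ 0)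
    (a b : MvPowerSeries (Fin M) K) (hdvd : f ∣ a * b) : f ∣ a ∨ f ∣ b := by
  obtain ⟨qa, ra, hra, -, hrafree⟩ := division f a j hc hj ⊤ (fun _ => trivial)
    trivial (fun _ => trivial)
  obtain ⟨qb, rb, hrb, -, hrbfree⟩ := division f b j hc hj ⊤ (fun _ => trivial)
    trivial (fun _ => trivial)
  have hdvd2 : f ∣ ra * rb := by
    have : ra * rb = a * b - f * (qa * b + ra * qb) := by
      rw [hra, hrb]; ring
    rw [this]
    exact dvd_sub hdvd (Dvd.intro _ rfl)
  obtain ⟨h, hh⟩ := hdvd2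
  have : h = 0 := by
    apply eq_zero_of_mul_pivot_free f j hc hj
    intro d hd
    rw [mul_comm, ← hh]
    exact mul_pivot_free j hrafree hrbfree d hd
  rw [this, mul_zero] at hh
  rcases mul_eq_zero.mp hh with h0 | h0
  · left; rw [hra, h0, add_zero]; exact ⟨qa, mul_comm _ _⟩
  · right; rw [hrb, h0, add_zero]; exact ⟨qb, mul_comm _ _⟩

section Descent

variable {R : Type} [CommRing R] [IsDomain R] {M : ℕ}

local notation "K" => FractionRing R

/-- an element of the fraction field all whose `n j`-denominator types exist,
for a unimodular family `n`, lies in `R` -/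
lemma mem_range_of_denominators (n m : Fin M → R) (huni : ∑ i, m i * n i = 1) (x : K)
    (hx : ∀ i, ∃ (k : ℕ) (c : R), algebraMap R K (n i) ^ k * x = algebraMap R K c) :
    ∃ c : R, x = algebraMap R K c := by
  classical
  -- uniform exponent
  choose k c hkc using hx
  set k₀ : ℕ := (Finset.univ.sup k) with hk₀
  have hup : ∀ i, algebraMap R K (n i) ^ k₀ * x = algebraMap R K (n i ^ (k₀ - k i) * c i) := by
    intro i
    have hle : k i ≤ k₀ := Finset.le_sup (Finset.mem_univ i)
    rw [map_mul, map_pow, ← hkc i, ← mul_assoc, ← pow_add]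
    have : k₀ - k i + k i = k₀ := by omega
    rw [this]
  -- 1 lies in the ideal spanned by the `n i ^ k₀`
  have hspan : (1 : R) ∈ Ideal.span (Set.range fun i => n i ^ k₀) := by
    have hrad : (1 : R) ∈ (Ideal.span (Set.range fun i => n i ^ k₀)).radical := by
      rw [← huni]
      apply Ideal.sum_mem
      intro i _
      apply Ideal.mul_mem_left
      exact ⟨k₀, Ideal.subset_span ⟨i, rfl⟩⟩
    obtain ⟨t, ht⟩ := hrad
    rwa [one_pow] at ht
  rw [Ideal.mem_span_range_iff_exists_fun] at hspan
  obtain ⟨u, hu⟩ := hspan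
  refine ⟨∑ i, u i * (n i ^ (k₀ - k i) * c i), ?_⟩
  have : x = algebraMap R K (∑ i, u i * n i ^ k₀) * x := by
    rw [show ∑ i, u i * n i ^ k₀ = (1:R) from hu, map_one, one_mul]
  rw [this, map_sum, Finset.sum_mul, map_sum]
  apply Finset.sum_congr rfl
  intro i _
  rw [map_mul, map_pow, mul_assoc, hup i, ← map_mul]

/-- the subring of the fraction field of elements with denominator a power of `s` -/
def denomSubring (s : R) : Subring K where
  carrier := {x | ∃ (k : ℕ) (c : R), algebraMap R K s ^ k * x = algebraMap R K c}
  zero_mem' := ⟨0, 0, by simp⟩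
  one_mem' := ⟨0, 1, by simp⟩
  add_mem' := by
    rintro x y ⟨k1, c1, h1⟩ ⟨k2, c2, h2⟩
    refine ⟨k1 + k2, s ^ k2 * c1 + s ^ k1 * c2, ?_⟩
    rw [mul_add, map_add, map_mul, map_mul, map_pow, map_pow]
    rw [pow_add]
    push_cast
    calc algebraMap R K s ^ k1 * algebraMap R K s ^ k2 * x +
          algebraMap R K s ^ k1 * algebraMap R K s ^ k2 * y
        = algebraMap R K s ^ k2 * (algebraMap R K s ^ k1 * x) +
          algebraMap R K s ^ k1 * (algebraMap R K s ^ k2 * y) := by ring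
      _ = _ := by rw [h1, h2]
  neg_mem' := by
    rintro x ⟨k1, c1, h1⟩
    exact ⟨k1, -c1, by rw [mul_neg, h1, map_neg]⟩
  mul_mem' := by
    rintro x y ⟨k1, c1, h1⟩ ⟨k2, c2, h2⟩
    refine ⟨k1 + k2, c1 * c2, ?_⟩
    rw [pow_add, map_mul]
    calc algebraMap R K s ^ k1 * algebraMap R K s ^ k2 * (x * y)
        = (algebraMap R K s ^ k1 * x) * (algebraMap R K s ^ k2 * y) := by ring
      _ = _ := by rw [h1, h2]

/-- **Key lemma**: a multivariate power series over a domain whose constant term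
vanishes and whose linear coefficients form a unimodular family is prime. -/
theorem prime_of_unimodular_linear (f : MvPowerSeries (Fin M) R) (n m : Fin M → R)
    (hconst : MvPowerSeries.constantCoeff (σ := Fin M) (R := R) f = 0)
    (hlin : ∀ i, MvPowerSeries.coeff (R := R) (Finsupp.single i 1) f = n i)
    (huni : ∑ i, m i * n i = 1) : Prime f := by
  classical
  have hι : Function.Injective (algebraMap R K) := IsFractionRing.injective R K
  set Φ : MvPowerSeries (Fin M) R →+* MvPowerSeries (Fin M) K :=
    MvPowerSeries.map (σ := Fin M) (algebraMap R K) with hΦ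
  have hΦcoeff : ∀ (y : MvPowerSeries (Fin M) R) d,
      MvPowerSeries.coeff (R := K) d (Φ y) = algebraMap R K (MvPowerSeries.coeff (R := R) d y) :=
    fun y d => rfl
  have hΦinj : Function.Injective Φ := by
    intro u v huv
    ext d
    apply hι
    rw [← hΦcoeff, ← hΦcoeff, huv]
  -- a pivot index
  have hex : ∃ j₀, n j₀ ≠ 0 := by
    by_contra hcon
    push_neg at hcon
    rw [Finset.sum_congr rfl (fun i _ => by rw [hcon i, mul_zero])] at huni
    simp at huni
  obtain ⟨j₀, hj₀⟩ := hex
  have hfc : MvPowerSeries.constantCoeff (σ := Fin M) (R := K) (Φ f) = 0 := by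
    rw [← MvPowerSeries.coeff_zero_eq_constantCoeff, hΦcoeff,
      MvPowerSeries.coeff_zero_eq_constantCoeff, hconst, map_zero]
  have hflin : ∀ i, MvPowerSeries.coeff (R := K) (Finsupp.single i 1) (Φ f) = algebraMap R K (n i) :=
    fun i => by rw [hΦcoeff, hlin]
  have hfj : ∀ i, n i ≠ 0 → MvPowerSeries.coeff (R := K) (Finsupp.single i 1) (Φ f) ≠ 0 := by
    intro i hi
    rw [hflin]
    exact fun hcon => hi (hι (by rwa [map_zero]))
  -- descent of divisibility
  have descend : ∀ y : MvPowerSeries (Fin M) R, Φ f ∣ Φ y → f ∣ y := by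
    intro y hdvd
    obtain ⟨h, hh⟩ := hdvd
    have hfne : Φ f ≠ 0 := by
      intro hcon
      apply hfj j₀ hj₀
      rw [hcon, map_zero]
    have hmem : ∀ d, ∃ c : R, MvPowerSeries.coeff (R := K) d h = algebraMap R K c := by
      intro d
      apply mem_range_of_denominators n m huni
      intro i
      rcases eq_or_ne (n i) 0 with hni | hni
      · exact ⟨1, 0, by rw [hni]; simp⟩
      · -- divide `Φ y` by `Φ f` with pivot `i` in the subring `denomSubring (n i)`
        obtain ⟨q, r, hqr, hqmem, hrfree⟩ := division (Φ f) (Φ y) i hfc (hfj i hni)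
          (denomSubring (n i))
          (fun d => ⟨0, MvPowerSeries.coeff (R := R) d f, by rw [pow_zero, one_mul, hΦcoeff]⟩)
          (by
            refine ⟨2, n i, ?_⟩
            rw [hflin]
            rw [pow_two, mul_assoc, mul_inv_cancel₀ (by
              exact fun hcon => hni (hι (by rwa [map_zero]))), mul_one])
          (fun d => ⟨0, MvPowerSeries.coeff (R := R) d y, by rw [pow_zero, one_mul, hΦcoeff]⟩)
        -- the remainder vanishes
        have hr0 : r = 0 := by
          have hfr : Φ f ∣ r := by
            have : r = Φ y - q * Φ f := by rw [hqr]; ring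
            rw [this]
            exact dvd_sub ⟨h, hh⟩ ⟨q, mul_comm _ _⟩
          obtain ⟨h', hh'⟩ := hfr
          have : h' = 0 := by
            apply eq_zero_of_mul_pivot_free (Φ f) i hfc (hfj i hni)
            intro d hd
            rw [mul_comm, ← hh']
            exact hrfree d hd
          rw [hh', this, mul_zero]
        have hqh : q = h := by
          have h1 : q * Φ f = h * Φ f := by
            rw [hr0, add_zero] at hqr
            rw [← hqr, hh, mul_comm]
          exact mul_right_cancel₀ hfne h1
        obtain ⟨k, c, hkc⟩ := hqmem d
        exact ⟨k, c, by rw [← hqh, hkc]⟩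
    choose hR hhR using hmem
    set yR : MvPowerSeries (Fin M) R := fun d => hR d with hyR
    have hΦyR : Φ yR = h := by
      ext d
      rw [hΦcoeff, hhR d]
      rfl
    refine ⟨yR, hΦinj ?_⟩
    rw [map_mul, hΦyR, hh]
  -- assemble primality
  refine ⟨?_, ?_, ?_⟩
  · intro hcon
    apply hj₀
    rw [← hlin j₀, hcon, map_zero]
  · intro hunit
    have := IsUnit.map (MvPowerSeries.constantCoeff (σ := Fin M) (R := R)) hunit
    rw [hconst] at this
    exact not_isUnit_zero this
  · intro a b hdvd
    have : Φ f ∣ Φ a * Φ b := by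
      rw [← map_mul]
      exact map_dvd Φ hdvd
    rcases dvd_or_dvd_of_pivot (Φ f) j₀ hfc (hfj j₀ hj₀) (Φ a) (Φ b) this with h | h
    · exact Or.inl (descend a h)
    · exact Or.inr (descend b h)

end Descent

end PSLemmas

namespace DemazureProof

open MvPowerSeries Finsupp

variable {R : Type} [CommRing R] (D : DemazureSetup R)

lemma sum_if_smul {n : ℕ} {Λ' : Type} [AddCommGroup Λ'] (f : Fin n → Λ') (j : Fin n) :
    ∑ i, (if i = j then (1 : ℤ) else 0) • f i = f j := by
  have : ∀ i, ((if i = j then (1 : ℤ) else 0) • f i) = if i = j then f i else 0 := by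
    intro i
    split <;> simp
  rw [Finset.sum_congr rfl fun i _ => this i]
  simp

lemma sum_if_nsmul {n : ℕ} {Λ' : Type} [AddCommGroup Λ'] (f : Fin n → Λ') (j : Fin n) :
    ∑ i, (if i = j then (1 : ℕ) else 0) • f i = f j := by
  have : ∀ i, ((if i = j then (1 : ℕ) else 0) • f i) = if i = j then f i else 0 := by
    intro i
    split <;> simp
  rw [Finset.sum_congr rfl fun i _ => this i]
  simp

/-- the Weyl group stabilizes the root lattice -/
lemma smul_mem_rootLat (w : D.W) (v : D.Λ)
    (hv : v ∈ Submodule.span ℤ (Set.range D.sroot)) :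
    w • v ∈ Submodule.span ℤ (Set.range D.sroot) := by
  set L : Submodule ℤ D.Λ := Submodule.span ℤ (Set.range D.sroot) with hL
  have base : ∀ (i : Fin D.n) (u : D.Λ), u ∈ L → D.s i • u ∈ L := by
    intro i u hu
    rw [D.s_act]
    exact Submodule.sub_mem _ hu
      (Submodule.smul_mem _ _ (Submodule.subset_span ⟨i, rfl⟩))
  have key : ∀ u : D.W, ∀ v : D.Λ, v ∈ L ↔ u • v ∈ L := by
    intro u
    have hu : u ∈ Subgroup.closure (Set.range D.s) := by rw [D.s_gen]; trivial
    induction hu using Subgroup.closure_induction with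
    | mem x hx =>
      obtain ⟨i, rfl⟩ := hx
      intro v
      constructor
      · exact base i v
      · intro hv
        have h2 : D.s i • (D.s i • v) = v := by
          rw [← mul_smul, D.s_sq, one_smul]
        have := base i _ hv
        rwa [h2] at this
    | one => intro v; rw [one_smul]
    | mul x y hx hy ihx ihy =>
      intro v
      rw [mul_smul]
      exact (ihy v).trans (ihx (y • v))
    | inv x hx ih =>
      intro v
      have := ih (x⁻¹ • v)
      rw [smul_inv_smul] at this
      exact this.symm
  exact (key w v).mp hv

/-- roots are nonzero -/
lemma root_ne_zero {v : D.Λ} (hv : ∃ (w : D.W) (i : Fin D.n), v = w • D.sroot i) : v ≠ 0 := by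
  obtain ⟨w, i, rfl⟩ := hv
  intro h
  have h2 : D.sroot i = 0 := by
    have := congrArg (fun z => w⁻¹ • z) h
    simpa [inv_smul_smul, smul_zero] using this
  exact D.roots_indep.ne_zero i h2

/-- elements of the positive cone have natural coordinates -/
lemma cone_coords {v : D.Λ} (hv : v ∈ AddSubmonoid.closure (Set.range D.sroot)) :
    ∃ c : Fin D.n → ℕ, v = ∑ i, c i • D.sroot i := by
  induction hv using AddSubmonoid.closure_induction with
  | mem x hx =>
    obtain ⟨i, rfl⟩ := hx
    exact ⟨fun k => if k = i then 1 else 0, (sum_if_nsmul _ i).symm⟩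
  | zero => exact ⟨0, by simp⟩
  | add x y hx hy ihx ihy =>
    obtain ⟨cx, hcx⟩ := ihx
    obtain ⟨cy, hcy⟩ := ihy
    refine ⟨cx + cy, ?_⟩
    rw [hcx, hcy, ← Finset.sum_add_distrib]
    refine Finset.sum_congr rfl fun i _ => ?_
    simp [add_smul]

/-- no root is twice another root -/
lemma not_two_smul_root {d g : D.Λ}
    (hd : ∃ (w : D.W) (i : Fin D.n), d = w • D.sroot i)
    (hg : ∃ (w : D.W) (i : Fin D.n), g = w • D.sroot i)
    (h2 : d = (2 : ℤ) • g) : False := by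
  obtain ⟨u, j, rfl⟩ := hd
  have hgl : u⁻¹ • g ∈ Submodule.span ℤ (Set.range D.sroot) := by
    obtain ⟨v, k, rfl⟩ := hg
    rw [← mul_smul]
    exact smul_mem_rootLat D _ _ (Submodule.subset_span ⟨k, rfl⟩)
  have hαj : D.sroot j = (2 : ℤ) • (u⁻¹ • g) := by
    have := congrArg (fun z => u⁻¹ • z) h2
    simp only [inv_smul_smul] at this
    rw [this]
    exact AddMonoidHom.map_zsmul (DistribMulAction.toAddMonoidHom D.Λ u⁻¹) 2 g
  rw [Submodule.mem_span_range_iff_exists_fun] at hgl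
  obtain ⟨c, hc⟩ := hgl
  have hrel : ∑ i, ((if i = j then 1 else 0) - 2 * c i) • D.sroot i = 0 := by
    have : ∑ i, ((if i = j then 1 else 0) - 2 * c i) • D.sroot i =
        (∑ i, (if i = j then (1:ℤ) else 0) • D.sroot i) - (2:ℤ) • ∑ i, c i • D.sroot i := by
      rw [Finset.smul_sum, ← Finset.sum_sub_distrib]
      refine Finset.sum_congr rfl fun i _ => ?_
      rw [sub_smul, mul_smul]
    rw [this, hc, ← hαj, sum_if_smul]
    exact sub_self _
  have hzero := Fintype.linearIndependent_iff.mp D.roots_indep _ hrel j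
  simp at hzero
  omega

/-- the pairing of a root with its own coroot is `2`; no two distinct positive
roots are proportional -/
lemma no_proportional_aux (a b : D.Λ) (ha : a ∈ D.posRoots) (hb : b ∈ D.posRoots)
    (hne : a ≠ b) (p q : ℤ) (hq : 0 < q) (hrel : q • a = p • b) : False := by
  obtain ⟨ca, hca⟩ := cone_coords D ha.2
  obtain ⟨cb, hcb⟩ := cone_coords D hb.2
  have hcaz : a = ∑ i, ((ca i : ℤ)) • D.sroot i := by
    rw [hca]; exact Finset.sum_congr rfl fun i _ => (natCast_zsmul _ _).symm
  have hcbz : b = ∑ i, ((cb i : ℤ)) • D.sroot i := by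
    rw [hcb]; exact Finset.sum_congr rfl fun i _ => (natCast_zsmul _ _).symm
  -- coordinates of the relation
  have hcoords : ∀ i, q * (ca i : ℤ) = p * (cb i : ℤ) := by
    have hrel2 : ∑ i, (q * (ca i : ℤ) - p * (cb i : ℤ)) • D.sroot i = 0 := by
      have : ∑ i, (q * (ca i : ℤ) - p * (cb i : ℤ)) • D.sroot i =
          q • a - p • b := by
        rw [hcaz, hcbz, Finset.smul_sum, Finset.smul_sum, ← Finset.sum_sub_distrib]
        refine Finset.sum_congr rfl fun i _ => ?_
        rw [sub_smul, mul_smul, mul_smul]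
      rw [this, hrel, sub_self]
    intro i
    have := Fintype.linearIndependent_iff.mp D.roots_indep _ hrel2 i
    omega
  -- positivity of p
  have hane : a ≠ 0 := root_ne_zero D ha.1
  have hex : ∃ i, ca i ≠ 0 := by
    by_contra hcon
    push_neg at hcon
    apply hane
    rw [hca]
    exact Finset.sum_eq_zero fun i _ => by rw [hcon i, zero_smul]
  obtain ⟨i₀, hi₀⟩ := hex
  have hp : 0 < p := by
    have hca1 : 1 ≤ (ca i₀ : ℤ) := by exact_mod_cast Nat.one_le_iff_ne_zero.mpr hi₀
    have h1 : 0 < q * (ca i₀ : ℤ) := by nlinarith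
    rw [hcoords i₀] at h1
    rcases le_or_gt p 0 with hple | hpgt
    · have : p * (cb i₀ : ℤ) ≤ 0 := mul_nonpos_of_nonpos_of_nonneg hple (by positivity)
      omega
    · exact hpgt
  -- reduce to coprime
  set g : ℤ := (Int.gcd q p : ℤ) with hgdef
  have hgnat : 0 < Int.gcd q p := Int.gcd_pos_iff.mpr (Or.inl (ne_of_gt hq))
  have hgpos : 0 < g := by rw [hgdef]; exact_mod_cast hgnat
  set q₁ : ℤ := q / g with hq1def
  set p₁ : ℤ := p / g with hp1def
  have hqg : g * q₁ = q := Int.mul_ediv_cancel' (Int.gcd_dvd_left q p)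
  have hpg : g * p₁ = p := Int.mul_ediv_cancel' (Int.gcd_dvd_right q p)
  have hcop : Int.gcd q₁ p₁ = 1 := Int.gcd_div_gcd_div_gcd hgnat
  have hq1pos : 0 < q₁ := by nlinarith
  have hp1pos : 0 < p₁ := by nlinarith
  have hcoords1 : ∀ i, q₁ * (ca i : ℤ) = p₁ * (cb i : ℤ) := by
    intro i
    apply mul_left_cancel₀ (ne_of_gt hgpos)
    have := hcoords i
    rw [← hqg, ← hpg] at this
    linarith [this]
  have hrel1 : q₁ • a = p₁ • b := by
    rw [hcaz, hcbz, Finset.smul_sum, Finset.smul_sum]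
    refine Finset.sum_congr rfl fun i _ => ?_
    rw [smul_smul, smul_smul, hcoords1 i]
  have hsmul : ∀ (u : D.W) (t : ℤ) (v : D.Λ), u • (t • v) = t • (u • v) :=
    fun u t v => AddMonoidHom.map_zsmul (DistribMulAction.toAddMonoidHom D.Λ u) t v
  -- pairing with the coroot of a
  obtain ⟨w, i, hwi⟩ := ha.1
  have hA2 : D.scoroot i (w⁻¹ • a) = 2 := by rw [hwi, inv_smul_smul, D.cartan_diag]
  have hpairA : q₁ * 2 = p₁ * D.scoroot i (w⁻¹ • b) := by
    have h := congrArg (fun z => D.scoroot i (w⁻¹ • z)) hrel1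
    simp only [hsmul, map_zsmul, smul_eq_mul] at h
    rw [hA2] at h
    exact h
  have hdvdp : p₁ ∣ 2 := by
    have h1 : p₁ ∣ 2 * q₁ := by
      rw [mul_comm q₁ 2] at hpairA
      exact Dvd.intro _ hpairA.symm
    refine Int.dvd_of_dvd_mul_left_of_gcd_one h1 ?_
    rw [Int.gcd_comm] at hcop
    exact hcop
  -- pairing with the coroot of b
  obtain ⟨w', i', hwi'⟩ := hb.1
  have hB2 : D.scoroot i' (w'⁻¹ • b) = 2 := by rw [hwi', inv_smul_smul, D.cartan_diag]
  have hpairB : q₁ * D.scoroot i' (w'⁻¹ • a) = p₁ * 2 := by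
    have h := congrArg (fun z => D.scoroot i' (w'⁻¹ • z)) hrel1
    simp only [hsmul, map_zsmul, smul_eq_mul] at h
    rw [hB2] at h
    exact h
  have hdvdq : q₁ ∣ 2 := by
    have h1 : q₁ ∣ 2 * p₁ := by
      rw [mul_comm p₁ 2] at hpairB
      exact Dvd.intro _ hpairB
    exact Int.dvd_of_dvd_mul_left_of_gcd_one h1 hcop
  have hp1le : p₁ ≤ 2 := Int.le_of_dvd (by norm_num) hdvdp
  have hq1le : q₁ ≤ 2 := Int.le_of_dvd (by norm_num) hdvdq
  have hp1cases : p₁ = 1 ∨ p₁ = 2 := by omega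
  have hq1cases : q₁ = 1 ∨ q₁ = 2 := by omega
  rcases hq1cases with hq1 | hq1 <;> rcases hp1cases with hp1 | hp1
  · rw [hq1, hp1, one_smul, one_smul] at hrel1
    exact hne hrel1
  · rw [hq1, one_smul] at hrel1
    rw [hp1] at hrel1
    exact not_two_smul_root D ha.1 hb.1 hrel1
  · rw [hp1, one_smul] at hrel1
    rw [hq1] at hrel1
    exact not_two_smul_root D hb.1 ha.1 hrel1.symm
  · rw [hq1, hp1] at hcop
    exact absurd hcop (by decide)

/-- distinct positive roots are not proportional -/
lemma no_proportional (a b : D.Λ) (ha : a ∈ D.posRoots) (hb : b ∈ D.posRoots)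
    (hne : a ≠ b) (p q : ℤ) (hq : q ≠ 0) (hrel : q • a = p • b) : False := by
  rcases lt_or_gt_of_ne hq with hlt | hgt
  · refine no_proportional_aux D a b ha hb hne (-p) (-q) (by omega) ?_
    rw [neg_smul, neg_smul, hrel]
  · exact no_proportional_aux D a b ha hb hne p q hgt hrel

section Psi

lemma const_psi_x (lam : D.Λ) :
    MvPowerSeries.constantCoeff (σ := Fin (Module.finrank ℤ D.Λ)) (R := R) (D.ψ (D.x lam)) = 0 := by
  rw [← D.aug_ψ, D.aug_x]

lemma x_mem_IF (lam : D.Λ) : D.x lam ∈ RingHom.ker D.aug.toRingHom :=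
  RingHom.mem_ker.mpr (D.aug_x lam)

lemma coeff_single_IF_sq (j : Fin (Module.finrank ℤ D.Λ)) (z : D.S)
    (hz : z ∈ RingHom.ker D.aug.toRingHom ^ 2) :
    MvPowerSeries.coeff (R := R) (Finsupp.single j 1) (D.ψ z) = 0 := by
  rw [sq] at hz
  refine Submodule.mul_induction_on hz ?_ ?_
  · intro a ha b hb
    have ha' : MvPowerSeries.constantCoeff (σ := Fin (Module.finrank ℤ D.Λ)) (R := R) (D.ψ a) = 0 := by
      rw [← D.aug_ψ]
      exact RingHom.mem_ker.mp ha
    have hb' : MvPowerSeries.constantCoeff (σ := Fin (Module.finrank ℤ D.Λ)) (R := R) (D.ψ b) = 0 := by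
      rw [← D.aug_ψ]
      exact RingHom.mem_ker.mp hb
    rw [map_mul, PSLemmas.coeff_single_mul, ha', hb', zero_mul, mul_zero, add_zero]
  · intro u v hu hv
    rw [map_add, map_add, hu, hv, add_zero]

lemma lin_coeff_add (j : Fin (Module.finrank ℤ D.Λ)) (lam mu : D.Λ) :
    MvPowerSeries.coeff (R := R) (Finsupp.single j 1) (D.ψ (D.x (lam + mu))) =
      MvPowerSeries.coeff (R := R) (Finsupp.single j 1) (D.ψ (D.x lam)) +
      MvPowerSeries.coeff (R := R) (Finsupp.single j 1) (D.ψ (D.x mu)) := by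
  have h2 := D.x_add lam mu 2
  have hT : (∑ p ∈ Finset.range 2 ×ˢ Finset.range 2,
        algebraMap R D.S (D.fgl.c p.1 p.2) * D.x lam ^ p.1 * D.x mu ^ p.2)
      = D.x lam + D.x mu + algebraMap R D.S (D.fgl.c 1 1) * D.x lam * D.x mu := by
    rw [Finset.sum_product]
    have hc00 : D.fgl.c 0 0 = 0 := D.fgl.c_zero 0 (by norm_num)
    have hc01 : D.fgl.c 0 1 = 1 := by rw [D.fgl.c_comm]; exact D.fgl.c_norm
    have hc10 : D.fgl.c 1 0 = 1 := D.fgl.c_norm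
    rw [Finset.sum_range_succ, Finset.sum_range_one, Finset.sum_range_succ,
      Finset.sum_range_one, Finset.sum_range_succ, Finset.sum_range_one]
    rw [hc00, hc01, hc10]
    simp only [pow_zero, pow_one, map_zero, map_one, zero_mul, one_mul, mul_one, zero_add]
    ring
  have hmem : D.x (lam + mu) - D.x lam - D.x mu ∈ RingHom.ker D.aug.toRingHom ^ 2 := by
    have hc11 : algebraMap R D.S (D.fgl.c 1 1) * D.x lam * D.x mu ∈
        RingHom.ker D.aug.toRingHom ^ 2 := by
      rw [sq]
      exact Ideal.mul_mem_mul (Ideal.mul_mem_left _ _ (x_mem_IF D lam)) (x_mem_IF D mu)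
    have h2' := h2
    rw [hT] at h2'
    have h3 : D.x (lam + mu) - D.x lam - D.x mu =
        (D.x (lam + mu) - (D.x lam + D.x mu + algebraMap R D.S (D.fgl.c 1 1) * D.x lam * D.x mu))
        + algebraMap R D.S (D.fgl.c 1 1) * D.x lam * D.x mu := by ring
    rw [h3]
    exact Ideal.add_mem _ h2' hc11
  have h0 := coeff_single_IF_sq D j _ hmem
  rw [map_sub, map_sub, map_sub, map_sub] at h0
  linear_combination h0

lemma lin_coeff_eq_repr (j : Fin (Module.finrank ℤ D.Λ)) (lam : D.Λ) :
    MvPowerSeries.coeff (R := R) (Finsupp.single j 1) (D.ψ (D.x lam)) = ((D.e.repr lam j : ℤ) : R) := by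
  let A : D.Λ →+ R :=
    { toFun := fun v => MvPowerSeries.coeff (R := R) (Finsupp.single j 1) (D.ψ (D.x v))
      map_zero' := by
        show MvPowerSeries.coeff (R := R) (Finsupp.single j 1) (D.ψ (D.x 0)) = 0
        rw [D.x_zero, map_zero, map_zero]
      map_add' := fun v u => lin_coeff_add D j v u }
  let B : D.Λ →+ R := (Int.castAddHom R).comp (D.e.coord j).toAddMonoidHom
  have hAB : A.toIntLinearMap = B.toIntLinearMap := by
    apply Module.Basis.ext D.e
    intro k
    show MvPowerSeries.coeff (R := R) (Finsupp.single j 1) (D.ψ (D.x (D.e k)))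
      = ((D.e.coord j (D.e k) : ℤ) : R)
    rw [D.ψ_x, MvPowerSeries.coeff_X, Module.Basis.coord_apply, Module.Basis.repr_self]
    by_cases hk : j = k
    · subst hk
      simp
    · rw [if_neg, Finsupp.single_apply, if_neg (fun h => hk h.symm)]
      · norm_num
      · intro hcon
        exact hk ((Finsupp.single_left_inj (one_ne_zero)).mp hcon)
  have := DFunLike.congr_fun hAB lam
  exact this

end Psi

section Main

variable [IsDomain R] [CharZero R]

/-- `x_α` is prime for every positive root `α` -/
lemma prime_x (a : D.Λ) (ha : a ∈ D.posRoots) : Prime (D.x a) := by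
  obtain ⟨w, i, hwi⟩ := ha.1
  obtain ⟨bb, j₀, hbj⟩ := D.basis_ext i
  -- the unimodularity functional
  let φ : D.Λ →+ ℤ := (bb.coord j₀).toAddMonoidHom.comp (DistribMulAction.toAddMonoidHom D.Λ w⁻¹)
  have hφa : φ a = 1 := by
    show bb.coord j₀ (w⁻¹ • a) = 1
    rw [hwi, inv_smul_smul, ← hbj, Module.Basis.coord_apply, Module.Basis.repr_self]
    simp
  have hsum : ∑ j, (D.e.repr a j) * φ (D.e j) = 1 := by
    rw [← hφa]
    conv_rhs => rw [← Module.Basis.sum_repr D.e a]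
    rw [map_sum]
    refine Finset.sum_congr rfl fun k _ => ?_
    rw [AddMonoidHom.map_zsmul, smul_eq_mul]
  have hprime : Prime (D.ψ (D.x a)) := by
    apply PSLemmas.prime_of_unimodular_linear (D.ψ (D.x a))
      (fun j => ((D.e.repr a j : ℤ) : R)) (fun j => ((φ (D.e j) : ℤ) : R))
    · exact const_psi_x D a
    · exact fun j => lin_coeff_eq_repr D j a
    · have hcast : ((∑ j, (D.e.repr a j) * φ (D.e j) : ℤ) : R) = 1 := by rw [hsum]; norm_num
      rw [← hcast]
      push_cast
      exact Finset.sum_congr rfl fun k _ => mul_comm _ _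
  -- transport along the algebra isomorphism ψ
  refine ⟨?_, ?_, ?_⟩
  · intro h0
    apply hprime.1
    rw [h0, map_zero]
  · intro hunit
    exact hprime.2.1 (hunit.map D.ψ)
  · intro u v huv
    have hdvd : D.ψ (D.x a) ∣ D.ψ u * D.ψ v := by
      obtain ⟨c, hc⟩ := huv
      exact ⟨D.ψ c, by rw [← map_mul, hc, map_mul]⟩
    rcases hprime.2.2 _ _ hdvd with h | h
    · left
      obtain ⟨c, hc⟩ := h
      refine ⟨D.ψ.symm c, ?_⟩
      have := congrArg D.ψ.symm hc
      rwa [AlgEquiv.symm_apply_apply, map_mul, AlgEquiv.symm_apply_apply] at this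
    · right
      obtain ⟨c, hc⟩ := h
      refine ⟨D.ψ.symm c, ?_⟩
      have := congrArg D.ψ.symm hc
      rwa [AlgEquiv.symm_apply_apply, map_mul, AlgEquiv.symm_apply_apply] at this

/-- `x_α` does not divide `x_β` for distinct positive roots -/
lemma x_not_dvd_x (a b : D.Λ) (ha : a ∈ D.posRoots) (hb : b ∈ D.posRoots)
    (hne : a ≠ b) (hdvd : D.x a ∣ D.x b) : False := by
  obtain ⟨c, hc⟩ := hdvd
  have hc' : D.ψ (D.x b) = D.ψ (D.x a) * D.ψ c := by rw [hc, map_mul]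
  have hlin : ∀ j, ((D.e.repr b j : ℤ) : R) = ((D.e.repr a j : ℤ) : R) *
      MvPowerSeries.constantCoeff (σ := Fin (Module.finrank ℤ D.Λ)) (R := R) (D.ψ c) := by
    intro j
    rw [← lin_coeff_eq_repr D j b, hc', PSLemmas.coeff_single_mul, const_psi_x D a,
      lin_coeff_eq_repr D j a, zero_mul, zero_add]
  have hane : a ≠ 0 := root_ne_zero D ha.1
  have hex : ∃ j, D.e.repr a j ≠ 0 := by
    by_contra hcon
    push_neg at hcon
    apply hane
    apply Module.Basis.ext_elem D.e
    intro j
    rw [hcon j, map_zero]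
    rfl
  obtain ⟨j₀, hj₀⟩ := hex
  have hcross : ∀ j, D.e.repr a j₀ * D.e.repr b j = D.e.repr b j₀ * D.e.repr a j := by
    intro j
    have h1 := hlin j
    have h2 := hlin j₀
    have hr : ((D.e.repr a j₀ * D.e.repr b j : ℤ) : R)
        = ((D.e.repr b j₀ * D.e.repr a j : ℤ) : R) := by
      push_cast
      rw [h1, h2]
      ring
    exact_mod_cast hr
  have hrel : (D.e.repr a j₀) • b = (D.e.repr b j₀) • a := by
    apply Module.Basis.ext_elem D.e
    intro j
    rw [map_smul, map_smul]
    rw [Finsupp.smul_apply, Finsupp.smul_apply, smul_eq_mul, smul_eq_mul]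
    exact hcross j
  exact no_proportional D b a hb ha (fun h => hne h.symm) _ _ hj₀ hrel

end Main

end DemazureProof

end

/-- **Lemma 2.2**:  assume `R` is an integral domain of characteristic `0` and `α, β ∈ Φ₊`.
Then (1) `x_α` is irreducible in `S`, and (2) if `α ≠ β` and `x_α ∣ x_β · x` in `S`,
then `x_α ∣ x`. -/
theorem x_root_irreducible_and_coprime
    {R : Type} [CommRing R] [IsDomain R] [CharZero R] (D : DemazureSetup R)
    (a b : D.Λ) (ha : a ∈ D.posRoots) (hb : b ∈ D.posRoots) :
    Irreducible (D.x a) ∧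
    (a ≠ b → ∀ q : D.S, D.x a ∣ D.x b * q → D.x a ∣ q) := by
  have hpa := DemazureProof.prime_x D a ha
  haveI hdom : IsDomain D.S := by
    haveI : IsDomain (MvPowerSeries (Fin (Module.finrank ℤ D.Λ)) R) := by
      constructor
    exact Function.Injective.isDomain D.ψ.toRingEquiv.toRingHom D.ψ.injective
  have hirr : Irreducible (D.x a) := by exact hpa.irreducible
  refine ⟨hirr, ?_⟩
  intro hne q hdvd
  rcases hpa.2.2 _ _ hdvd with h | h
  · exact absurd h (fun hd => DemazureProof.x_not_dvd_x D a b ha hb hne hd)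
  · exact h
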